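/- If x ≺ y for nonnegative vectors with nonincreasing components, then x can be derived from y by applying at most n−1 B-transforms. -/

import Mathlib

open Finset Matrix

/-- Prefix sum of the first `k` components. -/
def psum {n : ℕ} (x : Fin n → ℝ) (k : ℕ) : ℝ :=
  ∑ i ∈ Finset.filter (fun i : Fin n => (i : ℕ) < k) Finset.univ, x i

/-- `x` is majorized by `y` (both assumed sorted nonincreasingly). -/
def Maj {n : ℕ} (x y : Fin n → ℝ) : Prop :=
  (∀ k, k < n → psum x k ≤ psum y k) ∧ (∑ i, x i) = ∑ i, y i

/-- An A-transform: for `i < j` and `λ ∈ [0,1]`, replace `x i` by `x i + λ * x j`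
and `x j` by `(1 - λ) * x j`. -/
def ATrans {n : ℕ} (x x' : Fin n → ℝ) : Prop :=
  ∃ (i j : Fin n) (lam : ℝ), i < j ∧ 0 ≤ lam ∧ lam ≤ 1 ∧
    x' = Function.update (Function.update x i (x i + lam * x j)) j ((1 - lam) * x j)

/-- A B-transform: for `i < j` and `λ ∈ [0,1]`, replace `y i` by `(1 - λ) * y i`
and `y j` by `y j + λ * y i`. -/
def BTrans {n : ℕ} (y y' : Fin n → ℝ) : Prop :=
  ∃ (i j : Fin n) (lam : ℝ), i < j ∧ 0 ≤ lam ∧ lam ≤ 1 ∧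
    y' = Function.update (Function.update y i ((1 - lam) * y i)) j (y j + lam * y i)

/-- Lower triangular row-stochastic matrix. -/
def LowerRS {n : ℕ} (L : Matrix (Fin n) (Fin n) ℝ) : Prop :=
  (∀ i j, 0 ≤ L i j) ∧ (∀ i j : Fin n, i < j → L i j = 0) ∧ (∀ i, ∑ j, L i j = 1)

/-- Upper triangular row-stochastic matrix. -/
def UpperRS {n : ℕ} (U : Matrix (Fin n) (Fin n) ℝ) : Prop :=
  (∀ i j, 0 ≤ U i j) ∧ (∀ i j : Fin n, j < i → U i j = 0) ∧ (∀ i, ∑ j, U i j = 1)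

lemma psum_top {n : ℕ} (g : Fin n → ℝ) : psum g n = ∑ i, g i := by
  unfold psum
  congr 1
  apply Finset.filter_true_of_mem
  intro i _
  exact i.is_lt

lemma psum_update {n : ℕ} (g : Fin n → ℝ) (a : Fin n) (c : ℝ) (k : ℕ) :
    psum (Function.update g a c) k = psum g k + (if (a:ℕ) < k then c - g a else 0) := by
  unfold psum
  by_cases h : (a:ℕ) < k
  · rw [if_pos h]
    have ha : a ∈ Finset.filter (fun i : Fin n => (i:ℕ) < k) Finset.univ := by simp [h]
    rw [Finset.sum_update_of_mem ha, ← Finset.add_sum_erase _ g ha]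
    have hE : Finset.filter (fun i : Fin n => (i:ℕ) < k) Finset.univ \ {a}
        = (Finset.filter (fun i : Fin n => (i:ℕ) < k) Finset.univ).erase a := by
      simp [Finset.erase_eq]
    rw [hE]; ring
  · rw [if_neg h, add_zero]
    apply Finset.sum_congr rfl
    intro m hm
    have hma : m ≠ a := by
      rintro rfl; exact h (Finset.mem_filter.mp hm).2
    simp [Function.update_of_ne hma]

lemma key_step {n : ℕ} (x y : Fin n → ℝ) (hx0 : ∀ i, 0 ≤ x i)
    (hmaj : Maj x y) (hne : x ≠ y) :
    ∃ y', BTrans y y' ∧ Maj x y' ∧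
      Finset.filter (fun i => x i ≠ y' i) Finset.univ
        ⊂ Finset.filter (fun i => x i ≠ y i) Finset.univ := by
  classical
  set D := Finset.filter (fun i => x i ≠ y i) Finset.univ with hD
  have hDne : D.Nonempty := by
    obtain ⟨i, hi⟩ := Function.ne_iff.mp hne
    exact ⟨i, by simp [hD, hi]⟩
  set i := D.min' hDne with hi
  have hiD : i ∈ D := D.min'_mem hDne
  have hixy : x i ≠ y i := by
    have := Finset.mem_filter.mp hiD; exact this.2
  have heq_lt : ∀ m : Fin n, m < i → x m = y m := by
    intro m hm
    by_contra hmm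
    exact absurd (D.min'_le m (by simp [hD, hmm])) (not_le.mpr hm)
  have hpe : psum x (i:ℕ) = psum y (i:ℕ) := by
    unfold psum
    apply Finset.sum_congr rfl
    intro m hm
    exact heq_lt m (Fin.lt_def.mpr (Finset.mem_filter.mp hm).2)
  have hstep : ∀ g : Fin n → ℝ, psum g ((i:ℕ)+1) = psum g (i:ℕ) + g i := by
    intro g
    unfold psum
    have hins : Finset.filter (fun m : Fin n => (m:ℕ) < (i:ℕ)+1) Finset.univ
        = insert i (Finset.filter (fun m : Fin n => (m:ℕ) < (i:ℕ)) Finset.univ) := by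
      ext m
      simp [Nat.lt_succ_iff_lt_or_eq, Fin.ext_iff, or_comm]
      rw [Fin.le_def, Fin.lt_def]; exact Nat.le_iff_lt_or_eq.trans or_comm
    rw [hins, Finset.sum_insert (by simp)]
    ring
  have hpsucc : psum x ((i:ℕ)+1) ≤ psum y ((i:ℕ)+1) := by
    rcases lt_or_eq_of_le (Nat.succ_le_of_lt i.is_lt) with h | h
    · exact hmaj.1 _ h
    · have h' : (i:ℕ)+1 = n := h
      rw [h', psum_top, psum_top]; exact le_of_eq hmaj.2
  have hxiltyi : x i < y i := by
    rw [hstep x, hstep y, hpe] at hpsucc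
    exact lt_of_le_of_ne (by linarith) hixy
  have hyipos : 0 < y i := lt_of_le_of_lt (hx0 i) hxiltyi
  have hexj : ∃ m, y m < x m := by
    by_contra hc
    push_neg at hc
    have : ∑ m, x m < ∑ m, y m :=
      Finset.sum_lt_sum (fun m _ => hc m) ⟨i, Finset.mem_univ i, hxiltyi⟩
    linarith [hmaj.2]
  set E := Finset.filter (fun m : Fin n => i < m ∧ y m < x m) Finset.univ with hE
  have hEne : E.Nonempty := by
    obtain ⟨m, hm⟩ := hexj
    refine ⟨m, ?_⟩
    simp only [hE, Finset.mem_filter, Finset.mem_univ, true_and]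
    refine ⟨?_, hm⟩
    rcases lt_trichotomy i m with h | h | h
    · exact h
    · exact absurd hm (by rw [← h]; linarith)
    · exact absurd (heq_lt m h) (by intro hq; rw [hq] at hm; linarith)
  set j := E.min' hEne with hj
  have hjE : j ∈ E := E.min'_mem hEne
  have hij : i < j := ((Finset.mem_filter.mp hjE).2).1
  have hyjltxj : y j < x j := ((Finset.mem_filter.mp hjE).2).2
  have hmid : ∀ m : Fin n, i < m → m < j → x m ≤ y m := by
    intro m h1 h2
    by_contra hc
    push_neg at hc
    refine absurd (E.min'_le m ?_) (not_le.mpr h2)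
    simp only [hE, Finset.mem_filter, Finset.mem_univ, true_and]
    exact ⟨h1, hc⟩
  set δ := min (y i - x i) (x j - y j) with hδ
  have hδpos : 0 < δ := lt_min (by linarith) (by linarith)
  have hδ1 : δ ≤ y i - x i := min_le_left _ _
  have hδ2 : δ ≤ x j - y j := min_le_right _ _
  set lam := δ / y i with hlam
  have hlam0 : 0 ≤ lam := div_nonneg hδpos.le hyipos.le
  have hlam1 : lam ≤ 1 := by
    rw [hlam, div_le_one hyipos]
    have := hx0 i; linarith
  have hlamyi : lam * y i = δ := div_mul_cancel₀ δ (ne_of_gt hyipos)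
  have hne_ij : i ≠ j := ne_of_lt hij
  set y' := Function.update (Function.update y i ((1 - lam) * y i)) j (y j + lam * y i)
    with hy'
  have hy'i : y' i = y i - δ := by
    rw [hy', Function.update_of_ne hne_ij, Function.update_self]
    rw [sub_mul, one_mul, hlamyi]
  have hy'j : y' j = y j + δ := by
    rw [hy', Function.update_self, hlamyi]
  have hy'other : ∀ m : Fin n, m ≠ i → m ≠ j → y' m = y m := by
    intro m hmi hmj
    rw [hy', Function.update_of_ne hmj, Function.update_of_ne hmi]
  have hpsum_y' : ∀ k, psum y' k
      = psum y k + (if (i:ℕ) < k then -δ else 0) + (if (j:ℕ) < k then δ else 0) := by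
    intro k
    rw [hy', psum_update, psum_update]
    have h1 : Function.update y i ((1 - lam) * y i) j = y j :=
      Function.update_of_ne (Ne.symm hne_ij) _ _
    rw [h1]
    have h2 : (1 - lam) * y i - y i = -δ := by rw [sub_mul, one_mul, hlamyi]; ring
    have h3 : y j + lam * y i - y j = δ := by rw [hlamyi]; ring
    rw [h2, h3]
  have hijn : (i:ℕ) < (j:ℕ) := Fin.lt_def.mp hij
  refine ⟨y', ⟨i, j, lam, hij, hlam0, hlam1, hy'⟩, ⟨?_, ?_⟩, ?_⟩
  · -- prefix sums
    intro k hk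
    rcases lt_or_ge (j:ℕ) k with hjk | hjk
    · rw [hpsum_y' k, if_pos (lt_trans hijn hjk), if_pos hjk]
      have := hmaj.1 k hk
      linarith
    · rcases lt_or_ge (i:ℕ) k with hik | hik
      · rw [hpsum_y' k, if_pos hik, if_neg (not_lt.mpr hjk)]
        have hkey : δ + psum x k ≤ psum y k := by
          have hsub : psum y k - psum x k
              = ∑ m ∈ Finset.filter (fun m : Fin n => (m:ℕ) < k) Finset.univ, (y m - x m) := by
            unfold psum
            rw [Finset.sum_sub_distrib]
          have hterm : ∀ m ∈ Finset.filter (fun m : Fin n => (m:ℕ) < k) Finset.univ,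
              0 ≤ y m - x m := by
            intro m hm
            have hmk : (m:ℕ) < k := (Finset.mem_filter.mp hm).2
            rcases lt_trichotomy m i with h | h | h
            · rw [heq_lt m h]; linarith
            · rw [h]; linarith
            · have hmj : m < j := Fin.lt_def.mpr (lt_of_lt_of_le hmk hjk)
              have := hmid m h hmj
              linarith
          have hi_mem : i ∈ Finset.filter (fun m : Fin n => (m:ℕ) < k) Finset.univ := by
            simp [hik]
          have := Finset.single_le_sum hterm hi_mem
          linarith
        linarith
      · rw [hpsum_y' k, if_neg (not_lt.mpr hik), if_neg (not_lt.mpr hjk)]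
        have := hmaj.1 k hk
        linarith
  · -- total sums
    rw [← psum_top x, ← psum_top y', hpsum_y' n,
      if_pos i.is_lt, if_pos j.is_lt, psum_top x, psum_top y, hmaj.2]
    ring
  · -- strict subset
    rw [Finset.ssubset_iff_of_subset]
    · rcases le_total (y i - x i) (x j - y j) with hc | hc
      · refine ⟨i, hiD, ?_⟩
        have : δ = y i - x i := min_eq_left hc
        simp only [Finset.mem_filter, Finset.mem_univ, true_and, not_not]
        rw [hy'i, this]; ring
      · refine ⟨j, ?_, ?_⟩
        · simp only [hD, Finset.mem_filter, Finset.mem_univ, true_and]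
          intro h; rw [h] at hyjltxj; linarith
        · have : δ = x j - y j := min_eq_right hc
          simp only [Finset.mem_filter, Finset.mem_univ, true_and, not_not]
          rw [hy'j, this]; ring
    · intro m hm
      have hm' : x m ≠ y' m := (Finset.mem_filter.mp hm).2
      simp only [hD, Finset.mem_filter, Finset.mem_univ, true_and]
      by_cases hmi : m = i
      · rw [hmi]; exact hixy
      · by_cases hmj : m = j
        · rw [hmj]; intro h; rw [h] at hyjltxj; linarith
        · rw [← hy'other m hmi hmj]; exact hm'
lemma chain_lemma {n : ℕ} (x : Fin n → ℝ) (hx0 : ∀ i, 0 ≤ x i) :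
    ∀ d (y : Fin n → ℝ),
      (Finset.filter (fun i => x i ≠ y i) Finset.univ).card = d → Maj x y →
      ∃ (m : ℕ) (f : ℕ → Fin n → ℝ), m ≤ d - 1 ∧ f 0 = y ∧ f m = x ∧
        ∀ t < m, BTrans (f t) (f (t + 1)) := by
  intro d
  induction d using Nat.strong_induction_on with
  | _ d ih =>
    intro y hcard hmaj
    by_cases hxy : x = y
    · exact ⟨0, fun _ => y, Nat.zero_le _, rfl, by rw [hxy],
        fun t ht => absurd ht (Nat.not_lt_zero t)⟩
    · obtain ⟨y', hB, hmaj', hss⟩ := key_step x y hx0 hmaj hxy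
      have hcard' := Finset.card_lt_card hss
      rw [hcard] at hcard'
      obtain ⟨m', f', hm', hf0, hfm, hBt⟩ := ih _ hcard' y' rfl hmaj'
      have hd2 : 2 ≤ d := by
        rw [← hcard]
        obtain ⟨i0, hi0⟩ := Function.ne_iff.mp hxy
        rw [Nat.succ_le_iff]
        apply Finset.one_lt_card.mpr
        by_contra hlt
        push_neg at hlt
        have hone : ∀ b : Fin n, b ≠ i0 → x b = y b := by
          intro b hb
          by_contra hbb
          exact hb (hlt b (by simp [hbb]) i0 (by simp [hi0]))
        have hsum : ∑ m, (x m - y m) = x i0 - y i0 := by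
          apply Finset.sum_eq_single i0
          · intro b _ hb; rw [hone b hb]; ring
          · intro h; exact absurd (Finset.mem_univ i0) h
        rw [Finset.sum_sub_distrib, hmaj.2, sub_self] at hsum
        exact hi0 (by linarith)
      refine ⟨m' + 1, fun t => if t = 0 then y else f' (t - 1), by omega, by simp, ?_, ?_⟩
      · simp only [Nat.add_sub_cancel, Nat.succ_ne_zero, if_false]
        exact hfm
      · intro t ht
        match t with
        | 0 =>
          simp only [if_pos rfl, Nat.sub_self, if_neg (Nat.one_ne_zero)]
          rw [hf0]
          exact hB
        | (s+1) =>
          simp only [Nat.succ_ne_zero, if_false, Nat.add_sub_cancel]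
          exact hBt s (by omega)

theorem stmt11 {n : ℕ} (x y : Fin n → ℝ)
    (hx0 : ∀ i, 0 ≤ x i) (hy0 : ∀ i, 0 ≤ y i)
    (hxs : Antitone x) (hys : Antitone y)
    (hmaj : Maj x y) :
    ∃ (m : ℕ) (f : ℕ → Fin n → ℝ), m ≤ n - 1 ∧ f 0 = y ∧ f m = x ∧
      ∀ t < m, BTrans (f t) (f (t + 1)) := by
  obtain ⟨m, f, hm, h0, hmx, hB⟩ := chain_lemma x hx0 _ y rfl hmaj
  refine ⟨m, f, ?_, h0, hmx, hB⟩
  have hdn : (Finset.filter (fun i => x i ≠ y i) Finset.univ).card ≤ n := by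
    have := Finset.card_filter_le (Finset.univ : Finset (Fin n)) (fun i => x i ≠ y i)
    simpa using this
  omega
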